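/- Let K be a field and let α be an element of the Brauer group Br(K). If for every prime number ℓ dividing the period of α and for every finite field extension K'/K, the restriction α_{K'} of period ℓ has index dividing ℓ², then (by induction on the period) the index of α divides the square of its period: ind(α) | per(α)². -/
import Mathlib

theorem stmt_0
    (F : Type) (Br : F → Type) [∀ L, AddCommGroup (Br L)]
    (Ext : F → ℕ → F → Prop)
    (res : ∀ {L : F} {d : ℕ} {L' : F}, Ext L d L' → Br L →+ Br L')
    (ind : ∀ L : F, Br L → ℕ)
    (hord : ∀ (L : F) (α : Br L), 0 < addOrderOf α)
    (hind0 : ∀ L : F, ind L (0 : Br L) = 1)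
    (htrans : ∀ {L : F} {d : ℕ} {L' : F} {e : ℕ} {L'' : F},
      Ext L d L' → Ext L' e L'' → Ext L (d * e) L'')
    (hindres : ∀ {L : F} {d : ℕ} {L' : F} (h : Ext L d L') (α : Br L),
      ind L α ∣ d * ind L' (res h α))
    (hsplit : ∀ (L : F) (α : Br L), ∃ (L' : F) (h : Ext L (ind L α) L'), res h α = 0)
    (hkill : ∀ {L : F} {d : ℕ} {L' : F} (h : Ext L d L') (α : Br L),
      res h α = 0 → ind L α ∣ d)
    (hmain : ∀ (L : F) (β : Br L) (ℓ : ℕ), ℓ.Prime → addOrderOf β = ℓ → ind L β ∣ ℓ ^ 2)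
    (K : F) (α : Br K) :
    ind K α ∣ (addOrderOf α) ^ 2 := by
  suffices H : ∀ n (L : F) (β : Br L), addOrderOf β = n → ind L β ∣ n ^ 2 from
    H _ K α rfl
  intro n
  induction n using Nat.strong_induction_on with
  | _ n IH =>
    intro L β hβ
    have hn0 : n ≠ 0 := by have := hord L β; omega
    rcases eq_or_ne n 1 with h1 | h1
    · subst h1
      have hβ0 : β = 0 := AddMonoid.addOrderOf_eq_one_iff.mp hβ
      rw [hβ0, hind0]
      exact one_dvd _
    · -- n has a prime factor ℓ
      set ℓ := n.minFac with hℓ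
      have hℓp : ℓ.Prime := Nat.minFac_prime h1
      have hℓdvd : ℓ ∣ n := Nat.minFac_dvd n
      set m := n / ℓ with hm
      have hnm : ℓ * m = n := Nat.mul_div_cancel' hℓdvd
      -- γ = m • β has order ℓ
      set γ := m • β with hγ
      have hm0 : m ≠ 0 := by
        intro h0; rw [h0, mul_zero] at hnm; exact hn0 hnm.symm
      have hγord : addOrderOf γ = ℓ := by
        have hd : m ∣ addOrderOf β := by rw [hβ]; exact ⟨ℓ, by rw [← hnm, Nat.mul_comm]⟩
        rw [hγ, addOrderOf_nsmul_of_dvd hm0 hd, hβ, ← hnm,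
          Nat.mul_div_cancel _ (Nat.pos_of_ne_zero hm0)]
      -- ind γ ∣ ℓ²
      have hγind : ind L γ ∣ ℓ ^ 2 := hmain L γ ℓ hℓp hγord
      -- split γ
      obtain ⟨L', h, hres0⟩ := hsplit L γ
      -- order of res β divides m
      have hresord : addOrderOf (res h β) ∣ m := by
        rw [addOrderOf_dvd_iff_nsmul_eq_zero, ← map_nsmul, ← hγ, hres0]
      have hlt : addOrderOf (res h β) < n := by
        have h1 : addOrderOf (res h β) ≤ m := Nat.le_of_dvd (Nat.pos_of_ne_zero hm0) hresord
        have h2 : m < n := by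
          rw [← hnm]
          have := hℓp.two_le
          calc m = 1 * m := (one_mul m).symm
          _ < ℓ * m :=
            Nat.mul_lt_mul_of_lt_of_le (by omega) le_rfl (Nat.pos_of_ne_zero hm0)
        omega
      have hIH : ind L' (res h β) ∣ (addOrderOf (res h β)) ^ 2 :=
        IH _ hlt L' (res h β) rfl
      have hIH' : ind L' (res h β) ∣ m ^ 2 :=
        hIH.trans (pow_dvd_pow_of_dvd hresord 2)
      -- combine
      have key : ind L β ∣ ind L γ * ind L' (res h β) := hindres h β
      calc ind L β ∣ ind L γ * ind L' (res h β) := key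
      _ ∣ ℓ ^ 2 * m ^ 2 := mul_dvd_mul hγind hIH'
      _ = n ^ 2 := by rw [← hnm]; ring
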